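/- Let l >= 3 and k >= 1, and let sigma be a signature of the cycle graph C_l on l vertices. If sigma is balanced (the product of all edge signs is +1), then the number of proper k-colorations of (C_l,sigma) is (2k)^l + (-1)^l * (2k) and the number of zero-free proper k-colorations is (2k-1)^l + (-1)^l * (2k-1). If sigma is unbalanced (the product of all edge signs is -1), these numbers are (2k)^l and (2k-1)^l - (-1)^l respectively. In particular, for every k a balanced and an unbalanced signature of C_l have different numbers of proper k-colorations and different numbers of zero-free proper k-colorations. -/

import Mathlib

open SimpleGraph Finset


/-- A proper `k`-coloration of a signed graph: colors are integers of absolute value at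
most `k`, and `κ(w) ≠ σ(vw) κ(v)` for every edge `vw`. -/
def IsProperCol {V : Type*} (G : SimpleGraph V) (σ : Sym2 V → ℤˣ) (k : ℕ) (κ : V → ℤ) : Prop :=
  (∀ v : V, |κ v| ≤ (k : ℤ)) ∧ ∀ u v : V, G.Adj u v → κ v ≠ (σ s(u, v) : ℤ) * κ u

/-- The chromatic number of a signed graph: the least `k` admitting a proper
`k`-coloration. -/
noncomputable def chromNum {V : Type*} (G : SimpleGraph V) (σ : Sym2 V → ℤˣ) : ℕ :=
  sInf {k | ∃ κ : V → ℤ, IsProperCol G σ k κ}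

/-- The zero-free chromatic number of a signed graph: the least `k` admitting a zero-free
proper `k`-coloration. -/
noncomputable def zfChromNum {V : Type*} (G : SimpleGraph V) (σ : Sym2 V → ℤˣ) : ℕ :=
  sInf {k | ∃ κ : V → ℤ, IsProperCol G σ k κ ∧ ∀ v : V, κ v ≠ 0}

/-- The number of proper `k`-colorations of a signed graph. -/
noncomputable def properColCount {V : Type*} (G : SimpleGraph V) (σ : Sym2 V → ℤˣ)
    (k : ℕ) : ℕ :=
  Set.ncard {κ : V → ℤ | IsProperCol G σ k κ}

/-- The number of zero-free proper `k`-colorations of a signed graph. -/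
noncomputable def zfColCount {V : Type*} (G : SimpleGraph V) (σ : Sym2 V → ℤˣ)
    (k : ℕ) : ℕ :=
  Set.ncard {κ : V → ℤ | IsProperCol G σ k κ ∧ ∀ v : V, κ v ≠ 0}

lemma units_int_sq (u : ℤˣ) : (u:ℤ) * u = 1 := by
  rw [← Units.val_mul, Int.units_mul_self, Units.val_one]

lemma units_mem_symm {C : Finset ℤ} (hC : ∀ x ∈ C, -x ∈ C) (u : ℤˣ) {x : ℤ}
    (hx : x ∈ C) : (u:ℤ) * x ∈ C := by
  rcases Int.units_eq_one_or u with h | h <;> simp [h, hx, hC x hx]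

noncomputable def pathSet (C : Finset ℤ) (m : ℕ) (e : Fin m → ℤˣ) (a b : ℤ) :
    Finset (Fin (m+1) → ℤ) :=
  (Fintype.piFinset fun _ => C).filter fun x =>
    x 0 = a ∧ x (Fin.last m) = b ∧ ∀ i : Fin m, x i.succ ≠ (e i : ℤ) * x i.castSucc

lemma fin_last_zero : (Fin.last 0) = 0 := rfl

lemma pathSet_card (C : Finset ℤ) (hC : ∀ x ∈ C, -x ∈ C) (m : ℕ) (e : Fin m → ℤˣ)
    (a b : ℤ) (ha : a ∈ C) (hb : b ∈ C) :
    ((pathSet C m e a b).card : ℤ) * C.card =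
      ((C.card : ℤ) - 1)^m - (-1)^m
        + (if b = ((∏ i, e i : ℤˣ) : ℤ) * a then (-1)^m * (C.card : ℤ) else 0) := by
  induction m generalizing b with
  | zero =>
    have hps : pathSet C 0 e a b = if b = a then {fun _ => a} else ∅ := by
      ext x
      simp only [pathSet, mem_filter, Fintype.mem_piFinset, fin_last_zero]
      constructor
      · rintro ⟨hmem, h0, hl, -⟩
        have hab : b = a := by rw [← h0, hl]
        rw [if_pos hab, mem_singleton]
        funext i
        have : i = 0 := by omega
        rw [this, h0]
      · intro hx
        by_cases hab : b = a
        · simp only [if_pos hab, mem_singleton] at hx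
          subst hx
          exact ⟨fun _ => ha, rfl, hab.symm, fun i => i.elim0⟩
        · simp [hab] at hx
    rw [hps]
    by_cases hab : b = a <;> simp [hab]
  | succ m ih =>
    set v : ℤ := (e (Fin.last m) : ℤ) * b with hv
    have hvC : v ∈ C := units_mem_symm hC _ hb
    have key : (pathSet C (m+1) e a b).card
        = ∑ c ∈ C.erase v, (pathSet C m (fun i : Fin m => e i.castSucc) a c).card := by
      rw [Finset.card_eq_sum_card_fiberwise
        (f := fun x => x (Fin.castSucc (Fin.last m))) (t := C.erase v)]
      · refine Finset.sum_congr rfl fun c hc => ?_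
        refine Finset.card_bij (fun x _ => x ∘ Fin.castSucc) ?_ ?_ ?_
        · rintro x hx
          simp only [pathSet, mem_filter, Fintype.mem_piFinset] at hx ⊢
          obtain ⟨⟨hmem, h0, hlast, hcons⟩, hfib⟩ := hx
          refine ⟨fun i => hmem _, ?_, hfib, fun i => hcons i.castSucc⟩
          · show x (Fin.castSucc 0) = a
            rw [Fin.castSucc_zero, h0]
        · rintro x hx y hy hxy
          simp only [pathSet, mem_filter, Fintype.mem_piFinset] at hx hy
          funext j
          refine Fin.lastCases ?_ ?_ j
          · rw [hx.1.2.2.1, hy.1.2.2.1]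
          · intro i
            exact congrFun hxy i
        · rintro y hy
          simp only [pathSet, mem_filter, Fintype.mem_piFinset] at hy
          obtain ⟨hmem, h0, hlast, hcons⟩ := hy
          refine ⟨Fin.snoc y b, ?_, ?_⟩
          · simp only [pathSet, mem_filter, Fintype.mem_piFinset]
            refine ⟨⟨?_, ?_, ?_, ?_⟩, ?_⟩
            · intro j
              refine Fin.lastCases ?_ ?_ j
              · rw [Fin.snoc_last]; exact hb
              · intro i; rw [Fin.snoc_castSucc]; exact hmem i
            · rw [show (0 : Fin (m+2)) = Fin.castSucc 0 from rfl, Fin.snoc_castSucc, h0]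
            · rw [Fin.snoc_last]
            · intro i
              refine Fin.lastCases ?_ ?_ i
              · rw [Fin.succ_last, Fin.snoc_last, Fin.snoc_castSucc, hlast]
                intro hcon
                have hcv : c ≠ v := Finset.ne_of_mem_erase hc
                apply hcv
                rw [hv, hcon, ← mul_assoc, units_int_sq, one_mul]
              · intro i'
                rw [show (Fin.castSucc i').succ = Fin.castSucc i'.succ from rfl,
                  Fin.snoc_castSucc,
                  show (Fin.castSucc i').castSucc = Fin.castSucc i'.castSucc from rfl,
                  Fin.snoc_castSucc]
                exact hcons i'
            · rw [Fin.snoc_castSucc, hlast]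
          · funext i
            exact Fin.snoc_castSucc _ _ _
      · intro x hx
        replace hx : x ∈ pathSet C (m+1) e a b := hx
        simp only [pathSet, mem_filter, Fintype.mem_piFinset] at hx
        obtain ⟨hmem, h0, hlast, hcons⟩ := hx
        refine Finset.mem_erase.2 ⟨?_, hmem _⟩
        intro hcon
        replace hcon : x (Fin.last m).castSucc = v := hcon
        have := hcons (Fin.last m)
        rw [Fin.succ_last, hlast, hcon, hv, ← mul_assoc, units_int_sq, one_mul] at this
        exact this rfl
    have hsum : ((pathSet C (m+1) e a b).card : ℤ) * C.card
        = ∑ c ∈ C.erase v, ((pathSet C m (fun i : Fin m => e i.castSucc) a c).card : ℤ) * C.card := by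
      rw [key]
      push_cast
      rw [Finset.sum_mul]
    rw [hsum]
    have hrw : ∀ c ∈ C.erase v, ((pathSet C m (fun i : Fin m => e i.castSucc) a c).card : ℤ) * C.card
        = ((C.card : ℤ) - 1)^m - (-1)^m
          + (if c = ((∏ i : Fin m, e i.castSucc : ℤˣ) : ℤ) * a then (-1)^m * (C.card : ℤ) else 0) :=
      fun c hc => ih _ _ (Finset.mem_of_mem_erase hc)
    rw [Finset.sum_congr rfl hrw, Finset.sum_add_distrib, Finset.sum_const,
      Finset.card_erase_of_mem hvC, Finset.sum_ite_eq' (C.erase v)]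
    have hPa : ((∏ i : Fin m, e i.castSucc : ℤˣ) : ℤ) * a ∈ C := units_mem_symm hC _ ha
    have hcard : 1 ≤ C.card := Finset.card_pos.2 ⟨a, ha⟩
    have hprod : (∏ i : Fin (m+1), e i) = (∏ i : Fin m, e i.castSucc) * e (Fin.last m) :=
      Fin.prod_univ_castSucc e
    have hiff : (((∏ i : Fin m, e i.castSucc : ℤˣ) : ℤ) * a ∈ C.erase v)
        ↔ ¬ (b = ((∏ i : Fin (m+1), e i : ℤˣ) : ℤ) * a) := by
      rw [Finset.mem_erase]
      constructor
      · rintro ⟨hne, -⟩ hcon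
        apply hne
        have h2 : ((e (Fin.last m) : ℤ)) * ((e (Fin.last m)) : ℤ) = 1 := units_int_sq _
        rw [hv, hcon, hprod, Units.val_mul]
        linear_combination (-(((∏ i : Fin m, e i.castSucc) : ℤˣ) : ℤ) * a) * h2
      · intro hne
        refine ⟨fun hcon => hne ?_, hPa⟩
        rw [hprod]
        have := congrArg (fun t => (e (Fin.last m) : ℤ) * t) hcon
        simp only [hv, ← mul_assoc, units_int_sq, one_mul] at this
        rw [← this]
        push_cast
        ring
      
    by_cases hPab : b = ((∏ i : Fin (m+1), e i : ℤˣ) : ℤ) * a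
    · rw [if_pos hPab, if_neg (by rw [hiff]; exact fun h => h hPab)]
      rw [nsmul_eq_mul, Nat.cast_sub hcard]
      push_cast
      ring
    · rw [if_neg hPab, if_pos (hiff.2 hPab)]
      rw [nsmul_eq_mul, Nat.cast_sub hcard]
      push_cast
      ring

lemma fin_castSucc_add_one {n : ℕ} (i : Fin n) : i.castSucc + 1 = i.succ := by
  have h : i.val < n := i.isLt
  apply Fin.ext
  rw [Fin.add_def]
  simp only [Fin.val_one', Fin.coe_castSucc, Fin.val_succ]
  have h1 : 1 % (n+1) = 1 := Nat.mod_eq_of_lt (by omega)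
  rw [h1]
  exact Nat.mod_eq_of_lt (by omega)

lemma fin_last_add_one {n : ℕ} : (Fin.last n) + 1 = 0 := by
  apply Fin.ext
  rw [Fin.add_def]
  simp [Fin.val_one', Nat.mod_self]

noncomputable def cycSet (C : Finset ℤ) (l : ℕ) [NeZero l] (e : Fin l → ℤˣ) : Finset (Fin l → ℤ) :=
  (Fintype.piFinset fun _ => C).filter fun x => ∀ i : Fin l, x (i+1) ≠ (e i : ℤ) * x i

lemma cycSet_card (C : Finset ℤ) (hC : ∀ x ∈ C, -x ∈ C) (hne : C.Nonempty)
    (m : ℕ) (e : Fin (m+3) → ℤˣ) :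
    ((cycSet C (m+3) e).card : ℤ) =
      ((C.card : ℤ) - 1)^(m+3) - (-1)^(m+3)
        + (-1)^(m+3) * ((C.filter fun x => ((∏ i, e i : ℤˣ) : ℤ) * x = x).card) := by
  set el : ℤˣ := e (Fin.last (m+2)) with hel
  set e' : Fin (m+2) → ℤˣ := fun i => e i.castSucc with he'
  set T2 : Finset (ℤ × ℤ) := (C ×ˢ C).filter (fun p => p.1 ≠ (el : ℤ) * p.2) with hT2
  have key : (cycSet C (m+3) e).card = ∑ p ∈ T2, (pathSet C (m+2) e' p.1 p.2).card := by
    rw [Finset.card_eq_sum_card_fiberwise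
      (f := fun x => (x 0, x (Fin.last (m+2)))) (t := T2)]
    · refine Finset.sum_congr rfl fun p hp => ?_
      rw [hT2, Finset.mem_filter, Finset.mem_product] at hp
      congr 1
      ext x
      simp only [cycSet, pathSet, Finset.mem_filter, Fintype.mem_piFinset]
      constructor
      · rintro ⟨⟨hmem, hcons⟩, hfib⟩
        have h0 : x 0 = p.1 := congrArg Prod.fst hfib
        have hl : x (Fin.last (m+2)) = p.2 := congrArg Prod.snd hfib
        refine ⟨hmem, h0, hl, fun i => ?_⟩
        have := hcons i.castSucc
        rwa [fin_castSucc_add_one] at this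
      · rintro ⟨hmem, h0, hl, hcons⟩
        refine ⟨⟨hmem, fun i => ?_⟩, ?_⟩
        · refine Fin.lastCases ?_ ?_ i
          · rw [fin_last_add_one, h0, hl]
            exact hp.2
          · intro j
            rw [fin_castSucc_add_one]
            exact hcons j
        · rw [Prod.ext_iff]
          exact ⟨h0, hl⟩
    · intro x hx
      replace hx : x ∈ cycSet C (m+3) e := hx
      simp only [cycSet, Finset.mem_filter, Fintype.mem_piFinset] at hx
      obtain ⟨hmem, hcons⟩ := hx
      show (x 0, x (Fin.last (m + 2))) ∈ T2
      rw [hT2, Finset.mem_filter, Finset.mem_product]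
      refine ⟨⟨hmem 0, hmem _⟩, ?_⟩
      have := hcons (Fin.last (m+2))
      rwa [fin_last_add_one] at this
  have hn0 : ((C.card : ℤ)) ≠ 0 := by
    have h : (0:ℤ) < (C.card : ℤ) := by exact_mod_cast Finset.card_pos.2 hne
    exact h.ne'
  refine mul_right_cancel₀ hn0 ?_
  have hsum : ((cycSet C (m+3) e).card : ℤ) * (C.card : ℤ)
      = ∑ p ∈ T2, ((pathSet C (m+2) e' p.1 p.2).card : ℤ) * (C.card : ℤ) := by
    rw [key]
    push_cast
    rw [Finset.sum_mul]
  rw [hsum]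
  have hpath : ∀ p ∈ T2, ((pathSet C (m+2) e' p.1 p.2).card : ℤ) * (C.card : ℤ)
      = ((C.card : ℤ) - 1)^(m+2) - (-1)^(m+2)
        + (if p.2 = ((∏ i : Fin (m+2), e' i : ℤˣ) : ℤ) * p.1
            then (-1)^(m+2) * (C.card : ℤ) else 0) := by
    intro p hp
    rw [hT2, Finset.mem_filter, Finset.mem_product] at hp
    exact pathSet_card C hC (m+2) e' p.1 p.2 hp.1.1 hp.1.2
  rw [Finset.sum_congr rfl hpath, hT2, Finset.sum_filter, Finset.sum_product]
  have hfe : ∀ a : ℤ, C.filter (fun b => a ≠ (el:ℤ) * b) = C.erase ((el:ℤ) * a) := by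
    intro a
    ext b
    rw [Finset.mem_filter, Finset.mem_erase]
    constructor
    · rintro ⟨hbC, hab⟩
      exact ⟨fun hcon => hab (by rw [hcon, ← mul_assoc, units_int_sq, one_mul]), hbC⟩
    · rintro ⟨hab, hbC⟩
      exact ⟨hbC, fun hcon => hab (by rw [hcon, ← mul_assoc, units_int_sq, one_mul])⟩
  have hprod : (∏ i : Fin (m+3), e i) = (∏ i : Fin (m+2), e' i) * el :=
    Fin.prod_univ_castSucc e
  have hinner : ∀ a ∈ C,
      (∑ b ∈ C, if a ≠ (el:ℤ) * b
        then ((C.card : ℤ) - 1)^(m+2) - (-1)^(m+2)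
          + (if b = ((∏ i : Fin (m+2), e' i : ℤˣ) : ℤ) * a
              then (-1)^(m+2) * (C.card : ℤ) else 0) else 0)
      = ((C.card : ℤ) - 1) * (((C.card : ℤ) - 1)^(m+2) - (-1)^(m+2))
        + (if ¬ (((∏ i : Fin (m+3), e i : ℤˣ) : ℤ) * a = a)
            then (-1)^(m+2) * (C.card : ℤ) else 0) := by
    intro a haC
    rw [← Finset.sum_filter, hfe a, Finset.sum_add_distrib, Finset.sum_const,
      Finset.card_erase_of_mem (units_mem_symm hC el haC),
      Finset.sum_ite_eq' (C.erase ((el:ℤ) * a))]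
    have hmemiff : (((∏ i : Fin (m+2), e' i : ℤˣ) : ℤ) * a ∈ C.erase ((el:ℤ) * a))
        ↔ ¬ (((∏ i : Fin (m+3), e i : ℤˣ) : ℤ) * a = a) := by
      rw [Finset.mem_erase, hprod, Units.val_mul]
      constructor
      · rintro ⟨hne2, -⟩ hcon
        apply hne2
        have h2 : ((el : ℤ)) * (el : ℤ) = 1 := units_int_sq el
        linear_combination (el : ℤ) * hcon - ((((∏ i : Fin (m+2), e' i : ℤˣ)) : ℤ) * a) * h2
      · intro hne2
        refine ⟨fun hcon => hne2 ?_, units_mem_symm hC _ haC⟩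
        have h2 : ((el : ℤ)) * (el : ℤ) = 1 := units_int_sq el
        linear_combination (el : ℤ) * hcon + a * h2
      
    by_cases hQ : (((∏ i : Fin (m+3), e i : ℤˣ) : ℤ) * a = a)
    · rw [if_neg (fun hmm => (hmemiff.1 hmm) hQ), if_neg (by simpa using hQ)]
      rw [nsmul_eq_mul, Nat.cast_sub (Finset.card_pos.2 hne)]
      push_cast
      ring
    · rw [if_pos (hmemiff.2 hQ), if_pos hQ]
      rw [nsmul_eq_mul, Nat.cast_sub (Finset.card_pos.2 hne)]
      push_cast
      ring
  rw [Finset.sum_congr rfl hinner, Finset.sum_add_distrib, Finset.sum_const,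
    Finset.sum_ite, Finset.sum_const, Finset.sum_const_zero, add_zero]
  have hsplit : ((C.filter fun a => ¬ (((∏ i : Fin (m+3), e i : ℤˣ) : ℤ) * a = a)).card : ℤ)
      = (C.card : ℤ) - ((C.filter fun a => (((∏ i : Fin (m+3), e i : ℤˣ) : ℤ) * a = a)).card : ℤ) := by
    have := Finset.card_filter_add_card_filter_not
      (s := C) (p := fun a => (((∏ i : Fin (m+3), e i : ℤˣ) : ℤ) * a = a))
    push_cast [← this]
    ring
  rw [nsmul_eq_mul, nsmul_eq_mul, hsplit]
  push_cast
  ring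

open SimpleGraph


lemma fin_two_ne_zero' {n : ℕ} : ((1:Fin (n+3)) + 1) ≠ 0 := by
  intro h2
  have hv := congrArg Fin.val h2
  rw [Fin.add_def] at hv
  simp only [Fin.val_mk, Fin.val_one', Fin.val_zero] at hv
  have e1 : (1 % (n+3)) = 1 := Nat.mod_eq_of_lt (by omega)
  rw [e1, Nat.mod_eq_of_lt (by omega)] at hv
  omega

lemma cycAdj {m : ℕ} (i : Fin (m+3)) : (cycleGraph (m+3)).Adj i (i+1) := by
  rw [cycleGraph_adj]
  right
  rw [add_sub_cancel_left]

lemma cycEdge {m : ℕ} : (cycleGraph (m+3)).edgeFinset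
    = Finset.image (fun i : Fin (m+3) => s(i, i+1)) Finset.univ := by
  ext e
  refine Sym2.inductionOn e fun u v => ?_
  simp only [mem_edgeFinset, mem_edgeSet, Finset.mem_image, Finset.mem_univ, true_and]
  constructor
  · intro hadj
    rw [cycleGraph_adj] at hadj
    rcases hadj with h | h
    · have hu : u = v + 1 := by rw [sub_eq_iff_eq_add.1 h]; exact add_comm 1 _
      exact ⟨v, by rw [← hu, Sym2.eq_swap]⟩
    · have hv : v = u + 1 := by rw [sub_eq_iff_eq_add.1 h]; exact add_comm 1 _
      exact ⟨u, by rw [← hv]⟩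
  · rintro ⟨i, hi⟩
    have : s(u, v) ∈ (cycleGraph (m+3)).edgeSet := by
      rw [← hi]
      exact (mem_edgeSet _).2 (cycAdj i)
    exact (mem_edgeSet _).1 this

lemma cycProd {m : ℕ} (σ : Sym2 (Fin (m+3)) → ℤˣ) :
    (∏ e ∈ (cycleGraph (m+3)).edgeFinset, σ e) = ∏ i : Fin (m+3), σ s(i, i+1) := by
  rw [cycEdge, Finset.prod_image]
  intro i _ j _ hij
  rw [Sym2.eq_iff] at hij
  rcases hij with ⟨h1, -⟩ | ⟨h1, h2⟩
  · exact h1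
  · exfalso
    apply fin_two_ne_zero' (n := m)
    have : i + 1 + 1 = i := by rw [h2, ← h1]
    have h3 : i + (1 + 1) = i + 0 := by rw [← add_assoc, this, add_zero]
    exact add_left_cancel h3

lemma properSet_eq {m : ℕ} (k : ℕ) (σ : Sym2 (Fin (m+3)) → ℤˣ) (C : Finset ℤ)
    (hCk : ∀ x : ℤ, x ∈ C ↔ |x| ≤ (k:ℤ)) :
    {κ : Fin (m+3) → ℤ | IsProperCol (cycleGraph (m+3)) σ k κ}
      = ↑(cycSet C (m+3) (fun i => σ s(i, i+1))) := by
  ext κ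
  rw [Set.mem_setOf_eq, Finset.mem_coe]
  simp only [cycSet, Finset.mem_filter, Fintype.mem_piFinset]
  constructor
  · rintro ⟨habs, hcol⟩
    exact ⟨fun v => (hCk _).2 (habs v), fun i => hcol i (i+1) (cycAdj i)⟩
  · rintro ⟨hmem, hcons⟩
    refine ⟨fun v => (hCk _).1 (hmem v), fun u v huv => ?_⟩
    rw [cycleGraph_adj] at huv
    rcases huv with h | h
    · have hu : u = v + 1 := by rw [sub_eq_iff_eq_add.1 h]; exact add_comm 1 _
      intro hcon
      apply hcons v
      rw [← hu]
      have hswap : s(v, u) = s(u, v) := Sym2.eq_swap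
      rw [hswap, hcon, ← mul_assoc, units_int_sq, one_mul]
    · have hv : v = u + 1 := by rw [sub_eq_iff_eq_add.1 h]; exact add_comm 1 _
      intro hcon
      apply hcons u
      rw [← hv]
      exact hcon

lemma zfSet_eq {m : ℕ} (k : ℕ) (σ : Sym2 (Fin (m+3)) → ℤˣ) (C : Finset ℤ)
    (hCk : ∀ x : ℤ, x ∈ C ↔ (|x| ≤ (k:ℤ) ∧ x ≠ 0)) :
    {κ : Fin (m+3) → ℤ | IsProperCol (cycleGraph (m+3)) σ k κ ∧ ∀ v, κ v ≠ 0}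
      = ↑(cycSet C (m+3) (fun i => σ s(i, i+1))) := by
  ext κ
  rw [Set.mem_setOf_eq, Finset.mem_coe]
  simp only [cycSet, Finset.mem_filter, Fintype.mem_piFinset]
  constructor
  · rintro ⟨⟨habs, hcol⟩, hzf⟩
    exact ⟨fun v => (hCk _).2 ⟨habs v, hzf v⟩, fun i => hcol i (i+1) (cycAdj i)⟩
  · rintro ⟨hmem, hcons⟩
    have hproper : IsProperCol (cycleGraph (m+3)) σ k κ := by
      refine ⟨fun v => ((hCk _).1 (hmem v)).1, fun u v huv => ?_⟩
      rw [cycleGraph_adj] at huv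
      rcases huv with h | h
      · have hu : u = v + 1 := by rw [sub_eq_iff_eq_add.1 h]; exact add_comm 1 _
        intro hcon
        apply hcons v
        rw [← hu]
        have hswap : s(v, u) = s(u, v) := Sym2.eq_swap
        rw [hswap, hcon, ← mul_assoc, units_int_sq, one_mul]
      · have hv : v = u + 1 := by rw [sub_eq_iff_eq_add.1 h]; exact add_comm 1 _
        intro hcon
        apply hcons u
        rw [← hv]
        exact hcon
    exact ⟨hproper, fun v => ((hCk _).1 (hmem v)).2⟩

open scoped Classical in
/-- The numbers of proper and zero-free proper `k`-colorations of a balanced and of an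
unbalanced signature of the cycle `C_l`; in particular they always differ. -/
theorem cycle_coloration_counts (l k : ℕ) (hl : 3 ≤ l) (hk : 1 ≤ k)
    (σ : Sym2 (Fin l) → ℤˣ) :
    ((∏ e ∈ (cycleGraph l).edgeFinset, σ e) = 1 →
      (properColCount (cycleGraph l) σ k : ℤ) = (2 * k) ^ l + (-1) ^ l * (2 * k) ∧
      (zfColCount (cycleGraph l) σ k : ℤ) =
        (2 * k - 1) ^ l + (-1) ^ l * (2 * k - 1)) ∧
    ((∏ e ∈ (cycleGraph l).edgeFinset, σ e) = -1 →
      (properColCount (cycleGraph l) σ k : ℤ) = (2 * k) ^ l ∧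
      (zfColCount (cycleGraph l) σ k : ℤ) = (2 * k - 1) ^ l - (-1) ^ l) ∧
    (∀ σ' : Sym2 (Fin l) → ℤˣ,
      (∏ e ∈ (cycleGraph l).edgeFinset, σ e) = 1 →
      (∏ e ∈ (cycleGraph l).edgeFinset, σ' e) = -1 →
      properColCount (cycleGraph l) σ k ≠ properColCount (cycleGraph l) σ' k ∧
      zfColCount (cycleGraph l) σ k ≠ zfColCount (cycleGraph l) σ' k) := by
  obtain ⟨m, rfl⟩ : ∃ m, l = m + 3 := ⟨l - 3, by omega⟩
  have main : ∀ τ : Sym2 (Fin (m+3)) → ℤˣ,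
      ((∏ e ∈ (cycleGraph (m+3)).edgeFinset, τ e) = 1 →
        (properColCount (cycleGraph (m+3)) τ k : ℤ)
            = (2 * (k:ℤ)) ^ (m+3) + (-1) ^ (m+3) * (2 * k) ∧
        (zfColCount (cycleGraph (m+3)) τ k : ℤ)
            = (2 * (k:ℤ) - 1) ^ (m+3) + (-1) ^ (m+3) * (2 * k - 1))
      ∧ ((∏ e ∈ (cycleGraph (m+3)).edgeFinset, τ e) = -1 →
        (properColCount (cycleGraph (m+3)) τ k : ℤ) = (2 * (k:ℤ)) ^ (m+3) ∧
        (zfColCount (cycleGraph (m+3)) τ k : ℤ) = (2 * (k:ℤ) - 1) ^ (m+3) - (-1) ^ (m+3)) := by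
    intro τ
    set e : Fin (m+3) → ℤˣ := fun i => τ s(i, i+1) with he
    set C : Finset ℤ := Finset.Icc (-(k:ℤ)) k with hCdef
    set C' : Finset ℤ := C.erase 0 with hC'def
    have hCk : ∀ x : ℤ, x ∈ C ↔ |x| ≤ (k:ℤ) := fun x => by
      rw [hCdef, Finset.mem_Icc, abs_le]
    have hC'k : ∀ x : ℤ, x ∈ C' ↔ (|x| ≤ (k:ℤ) ∧ x ≠ 0) := fun x => by
      rw [hC'def, Finset.mem_erase, hCk x, and_comm]
    have hCsym : ∀ x ∈ C, -x ∈ C := fun x hx => by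
      rw [hCk] at hx ⊢; rwa [abs_neg]
    have hC'sym : ∀ x ∈ C', -x ∈ C' := fun x hx => by
      rw [hC'k] at hx ⊢
      exact ⟨by rw [abs_neg]; exact hx.1, neg_ne_zero.2 hx.2⟩
    have h0C : (0:ℤ) ∈ C := by rw [hCk]; simp
    have hCcard : C.card = 2*k+1 := by
      rw [hCdef, Int.card_Icc]; omega
    have hC'card : C'.card = 2*k := by
      rw [hC'def, Finset.card_erase_of_mem h0C, hCcard]
      omega
    have hCne : C.Nonempty := ⟨0, h0C⟩
    have hC'ne : C'.Nonempty := ⟨1, by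
      rw [hC'k]
      constructor
      · rw [abs_one]; exact_mod_cast hk
      · norm_num⟩
    have hpc : (properColCount (cycleGraph (m+3)) τ k : ℤ)
        = ((cycSet C (m+3) e).card : ℤ) := by
      rw [properColCount, properSet_eq k τ C hCk, Set.ncard_coe_finset]
    have hzc : (zfColCount (cycleGraph (m+3)) τ k : ℤ)
        = ((cycSet C' (m+3) e).card : ℤ) := by
      rw [zfColCount, zfSet_eq k τ C' hC'k, Set.ncard_coe_finset]
    have hprod : (∏ e ∈ (cycleGraph (m+3)).edgeFinset, τ e) = ∏ i, e i := by
      rw [cycProd τ]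
    constructor
    · intro hbal
      rw [hprod] at hbal
      have hF : (C.filter fun x => ((∏ i, e i : ℤˣ) : ℤ) * x = x) = C :=
        Finset.filter_true_of_mem fun x _ => by rw [hbal, Units.val_one, one_mul]
      have hF' : (C'.filter fun x => ((∏ i, e i : ℤˣ) : ℤ) * x = x) = C' :=
        Finset.filter_true_of_mem fun x _ => by rw [hbal, Units.val_one, one_mul]
      constructor
      · rw [hpc, cycSet_card C hCsym hCne m e, hF, hCcard]
        push_cast
        ring
      · rw [hzc, cycSet_card C' hC'sym hC'ne m e, hF', hC'card]
        push_cast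
        ring
    · intro hunbal
      rw [hprod] at hunbal
      have hneg : ∀ x : ℤ, (((∏ i, e i : ℤˣ) : ℤ) * x = x) ↔ x = 0 := by
        intro x
        rw [hunbal]
        simp only [Units.val_neg, Units.val_one, neg_mul, one_mul]
        constructor
        · intro h; linarith
        · intro h; rw [h]; ring
      have hF : (C.filter fun x => ((∏ i, e i : ℤˣ) : ℤ) * x = x) = {0} := by
        ext x
        rw [Finset.mem_filter, hneg, Finset.mem_singleton]
        constructor
        · exact fun h => h.2
        · rintro rfl; exact ⟨h0C, rfl⟩
      have hF' : (C'.filter fun x => ((∏ i, e i : ℤˣ) : ℤ) * x = x) = ∅ :=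
        Finset.filter_false_of_mem fun x hx => by
          rw [hneg]
          exact ((hC'k x).1 hx).2
      constructor
      · rw [hpc, cycSet_card C hCsym hCne m e, hF, hCcard]
        simp only [Finset.card_singleton]
        push_cast
        ring
      · rw [hzc, cycSet_card C' hC'sym hC'ne m e, hF', hC'card]
        simp only [Finset.card_empty]
        push_cast
        ring
  refine ⟨(main σ).1, (main σ).2, fun σ' h1 h2 => ?_⟩
  obtain ⟨A1, A2⟩ := (main σ).1 h1
  obtain ⟨B1, B2⟩ := (main σ').2 h2
  have h2k : (2 * (k:ℤ)) ≠ 0 := by positivity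
  have hsgn : ((-1:ℤ))^(m+3) ≠ 0 := pow_ne_zero _ (by norm_num)
  have hkey : ((-1:ℤ))^(m+3) * (2 * k) ≠ 0 := mul_ne_zero hsgn h2k
  constructor
  · intro hEq
    have hcast : (properColCount (cycleGraph (m+3)) σ k : ℤ)
        = (properColCount (cycleGraph (m+3)) σ' k : ℤ) := by exact_mod_cast hEq
    rw [A1, B1] at hcast
    exact hkey (by linarith)
  · intro hEq
    have hcast : (zfColCount (cycleGraph (m+3)) σ k : ℤ)
        = (zfColCount (cycleGraph (m+3)) σ' k : ℤ) := by exact_mod_cast hEq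
    rw [A2, B2] at hcast
    apply hkey
    have hx : ((-1:ℤ))^(m+3) * (2 * k - 1) + (-1)^(m+3) = 0 := by linarith
    linarith [hx]
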